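/- Let F be a field of characteristic p > 0 and φ = ⟨a₀,a₁,…,aₙ⟩ a diagonal quasilinear p-form over F with a₀ ≠ 0, and suppose [F^p(a₁/a₀,…,aₙ/a₀) : F^p] = p^k with k ≥ 1. Then there exist nonzero values d₀,d₁,…,d_k ∈ D_F(φ) such that {d₁/d₀,…,d_k/d₀} is p-independent over F; in other words, φ contains a subform similar to a minimal quasilinear p-form of dimension k+1. -/

import Mathlib

open scoped BigOperators

set_option synthInstance.maxHeartbeats 1000000
set_option maxHeartbeats 1000000

/-- The subfield `F^p` of `p`-th powers of `F` (generated as a subfield). -/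
def pPow (p : ℕ) (F : Type*) [Field F] : Subfield F :=
  Subfield.closure (Set.range fun x : F => x ^ p)

/-- The degree `[F^p(S) : F^p]`. -/
noncomputable def pDeg (p : ℕ) {F : Type*} [Field F] (S : Set F) : ℕ :=
  Module.finrank ↥(pPow p F) ↥(IntermediateField.adjoin ↥(pPow p F) S)

/-- A finite family `a : ι → F` is `p`-independent over `F` if
`[F^p(a i, i : ι) : F^p] = p ^ #ι`. -/
def pIndep (p : ℕ) {F : Type*} [Field F] {ι : Type*} [Fintype ι] (a : ι → F) : Prop :=
  pDeg p (Set.range a) = p ^ Fintype.card ι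

/-- The defect `i_d(φ_E)` of the diagonal quasilinear `p`-form with coefficients `a` over `E`:
the `E`-dimension of its zero set (an `E`-subspace in characteristic `p`). -/
noncomputable def defect (p : ℕ) (E : Type*) [Field E] {ι : Type*} [Fintype ι] (a : ι → E) : ℕ :=
  Module.finrank E ↥(Submodule.span E {x : ι → E | ∑ i, a i * x i ^ p = 0})

/-- A diagonal quasilinear `p`-form is anisotropic over `E`. -/
def Anisotropic (p : ℕ) (E : Type*) [Field E] {ι : Type*} [Fintype ι] (a : ι → E) : Prop :=
  ∀ x : ι → E, ∑ i, a i * x i ^ p = 0 → x = 0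

/-- The value set `D_E(φ)` of a diagonal quasilinear `p`-form. -/
def valueSet (p : ℕ) (E : Type*) [Field E] {ι : Type*} [Fintype ι] (a : ι → E) : Set E :=
  {y | ∃ x : ι → E, y = ∑ i, a i * x i ^ p}
section Aux

open IntermediateField Polynomial

lemma isIntegral_of_pow {F : Type*} [Field F] {K : Type*} [Field K] [Algebra K F]
    (p : ℕ) (hp : p ≠ 0)
    (x : F) (y : K) (hy : algebraMap K F y = x ^ p) : IsIntegral K x :=
  ⟨X ^ p - C y, monic_X_pow_sub_C y hp, by simp [hy, sub_eq_zero]⟩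

lemma finrank_adjoin_simple {F : Type*} [Field F] (p : ℕ) [Fact p.Prime] [CharP F p]
    {K : Type*} [Field K] [Algebra K F]
    (x : F) (y : K) (hy : algebraMap K F y = x ^ p)
    (hx : ¬ ∃ z : K, algebraMap K F z = x) :
    Module.finrank K K⟮x⟯ = p := by
  have hp0 : p ≠ 0 := (Fact.out (p := p.Prime)).ne_zero
  have hirr : Irreducible (X ^ p - C y) := by
    refine X_pow_sub_C_irreducible_of_prime (Fact.out) fun b hb => hx ⟨b, ?_⟩
    have h1 : (algebraMap K F b) ^ p = x ^ p := by rw [← map_pow, hb, hy]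
    have h2 : (algebraMap K F b - x) ^ p = 0 := by
      rw [sub_pow_char, h1, sub_self]
    exact sub_eq_zero.mp (pow_eq_zero_iff hp0 |>.mp h2)
  have hmin : minpoly K x = X ^ p - C y := by
    refine (minpoly.eq_of_irreducible_of_monic hirr ?_ (monic_X_pow_sub_C y hp0)).symm
    simp [hy, sub_eq_zero]
  rw [IntermediateField.adjoin.finrank (isIntegral_of_pow p hp0 x y hy), hmin,
    natDegree_X_pow_sub_C]

universe u

lemma greedy {F : Type u} [Field F] (p : ℕ) [Fact p.Prime] [CharP F p] (k : ℕ) :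
    ∀ {n : ℕ} (K : Type u) [Field K] [Algebra K F]
      (_ : ∀ x : F, ∃ y : K, algebraMap K F y = x ^ p) (c : Fin n → F),
      Module.finrank K (adjoin K (Set.range c)) = p ^ k →
      ∃ σ : Fin k → Fin n, (∀ j, c (σ j) ≠ 0) ∧
        Module.finrank K (adjoin K (Set.range (c ∘ σ))) = p ^ k := by
  have hp : p.Prime := Fact.out
  induction k with
  | zero =>
    intro n K _ _ hq c h
    refine ⟨Fin.elim0, fun j => j.elim0, ?_⟩
    have : Set.range (c ∘ (Fin.elim0 : Fin 0 → Fin n)) = ∅ := Set.range_eq_empty _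
    rw [this, adjoin_empty, pow_zero, IntermediateField.finrank_bot]
  | succ k ih =>
    intro n K _ _ hq c h
    have hne : ∃ i, ¬ ∃ z : K, algebraMap K F z = c i := by
      by_contra hall
      push_neg at hall
      have hbot : adjoin K (Set.range c) = ⊥ := by
        rw [eq_bot_iff, adjoin_le_iff]
        rintro x ⟨i, rfl⟩
        obtain ⟨z, hz⟩ := hall i
        exact hz ▸ (⊥ : IntermediateField K F).algebraMap_mem z
      rw [hbot, IntermediateField.finrank_bot] at h
      exact absurd h.symm (Nat.ne_of_gt (Nat.one_lt_pow (Nat.succ_ne_zero k) hp.one_lt))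
    obtain ⟨i, hi⟩ := hne
    obtain ⟨y, hy⟩ := hq (c i)
    have hK' : Module.finrank K K⟮c i⟯ = p := finrank_adjoin_simple p (c i) y hy hi
    have hq' : ∀ x : F, ∃ y : K⟮c i⟯, algebraMap K⟮c i⟯ F y = x ^ p := fun x => by
      obtain ⟨y, hy⟩ := hq x
      exact ⟨⟨algebraMap K F y, K⟮c i⟯.algebraMap_mem y⟩, hy⟩
    have hres : (adjoin K⟮c i⟯ (Set.range c)).restrictScalars K = adjoin K (Set.range c) := by
      rw [adjoin_adjoin_left]
      congr 1
      exact Set.union_eq_self_of_subset_left (Set.singleton_subset_iff.mpr ⟨i, rfl⟩)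
    have htower : Module.finrank K K⟮c i⟯ *
        Module.finrank K⟮c i⟯ (adjoin K⟮c i⟯ (Set.range c)) =
        Module.finrank K (adjoin K (Set.range c)) := by
      rw [← hres]
      exact Module.finrank_mul_finrank K K⟮c i⟯ (adjoin K⟮c i⟯ (Set.range c))
    have hdeg' : Module.finrank K⟮c i⟯ (adjoin K⟮c i⟯ (Set.range c)) = p ^ k := by
      rw [hK', h, pow_succ'] at htower
      exact Nat.eq_of_mul_eq_mul_left hp.pos htower
    obtain ⟨σ', hσ'0, hσ'⟩ := ih K⟮c i⟯ hq' c hdeg'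
    refine ⟨Fin.cons i σ', ?_, ?_⟩
    · intro j
      refine Fin.cases ?_ hσ'0 j
      intro h0
      exact hi ⟨0, by rw [map_zero, Fin.cons_zero] at *; rw [h0]⟩
    · have hr : Set.range (c ∘ Fin.cons i σ') = {c i} ∪ Set.range (c ∘ σ') := by
        rw [Set.range_comp, Fin.range_cons, Set.image_insert_eq, Set.range_comp]
        rw [Set.singleton_union]
      have h2 := Module.finrank_mul_finrank K K⟮c i⟯ (adjoin K⟮c i⟯ (Set.range (c ∘ σ')))
      rw [hK', hσ'] at h2
      rw [hr, ← adjoin_adjoin_left, pow_succ']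
      exact h2.symm

end Aux

/-- If the norm degree of `φ = ⟨a₀,…,aₙ⟩` is `p^k` with `k ≥ 1`, then `φ` contains a subform
similar to a minimal `p`-form of dimension `k + 1`: there are nonzero values `d₀,…,d_k` of `φ`
with `{d₁/d₀,…,d_k/d₀}` `p`-independent over `F`. -/
theorem exists_minimal_subform (p : ℕ) [Fact p.Prime] (F : Type*) [Field F] [CharP F p]
    (n : ℕ) (a : Fin (n + 1) → F) (ha0 : a 0 ≠ 0) (k : ℕ) (hk : 1 ≤ k)
    (hdeg : pDeg p (Set.range fun i : Fin n => a i.succ / a 0) = p ^ k) :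
    ∃ d : Fin (k + 1) → F,
      (∀ j, d j ∈ valueSet p F a) ∧ (∀ j, d j ≠ 0) ∧
        pIndep p (fun j : Fin k => d j.succ / d 0) := by
  classical
  have hp : p.Prime := Fact.out
  have hq : ∀ x : F, ∃ y : ↥(pPow p F), algebraMap ↥(pPow p F) F y = x ^ p :=
    fun x => ⟨⟨x ^ p, Subfield.subset_closure ⟨x, rfl⟩⟩, rfl⟩
  obtain ⟨σ, hσ0, hσ⟩ := greedy p k ↥(pPow p F) hq
    (fun i : Fin n => a i.succ / a 0) hdeg
  have hval : ∀ m : Fin (n + 1), a m ∈ valueSet p F a := fun m => by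
    refine ⟨fun i => if i = m then 1 else 0, ?_⟩
    rw [Finset.sum_eq_single m]
    · simp
    · intro b _ hb
      simp [hb, zero_pow hp.ne_zero]
    · simp
  refine ⟨Fin.cons (a 0) (fun j => a (σ j).succ), ?_, ?_, ?_⟩
  · intro j
    refine Fin.cases ?_ ?_ j <;> simp [hval]
  · intro j
    refine Fin.cases ?_ ?_ j
    · simpa using ha0
    · intro j
      simp only [Fin.cons_succ]
      intro h0
      exact hσ0 j (by simp [h0])
  · show pDeg p _ = _
    have he : (fun j : Fin k =>
        (Fin.cons (a 0) (fun j : Fin k => a (σ j).succ) : Fin (k + 1) → F) j.succ /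
          (Fin.cons (a 0) (fun j : Fin k => a (σ j).succ) : Fin (k + 1) → F) 0) =
        (fun i : Fin n => a i.succ / a 0) ∘ σ := by
      funext j
      simp [Fin.cons_succ, Fin.cons_zero]
    rw [he]
    simpa [pDeg] using hσ
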